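/- Let A ∈ ℝ^{p×q} have singular value decomposition A = U·S·Vᵀ with singular values s₁,…,s_r on the diagonal of S, and let λ > 0. Then the function X ↦ (1/2)·‖X − A‖_F² + λ·‖X‖_tr over X ∈ ℝ^{p×q} has the unique minimizer U·max(S − λ, 0)·Vᵀ, i.e., the matrix obtained by replacing each singular value s_i of A by max(s_i − λ, 0) (singular value soft-thresholding). -/

import Mathlib

open Real BigOperators Matrix Finset

namespace STAux

/-- Bessel-type inequality for a finite family that is pairwise orthogonal with norms ≤ 1. -/
lemma bessel {k m : ℕ} (u : Fin k → Fin m → ℝ)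
    (horth : ∀ j l, j ≠ l → u j ⬝ᵥ u l = 0)
    (hnorm : ∀ j, u j ⬝ᵥ u j ≤ 1) (z : Fin m → ℝ) :
    ∑ j, (u j ⬝ᵥ z) ^ 2 ≤ z ⬝ᵥ z := by
  set c : Fin k → ℝ := fun j => u j ⬝ᵥ z with hc
  have h0 : (0:ℝ) ≤ ∑ i, (z i - ∑ j, c j * u j i) ^ 2 :=
    Finset.sum_nonneg fun i _ => sq_nonneg _
  have e2 : ∑ i, z i * ∑ j, c j * u j i = ∑ j, c j ^ 2 := by
    simp_rw [Finset.mul_sum]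
    rw [Finset.sum_comm]
    refine Finset.sum_congr rfl fun j _ => ?_
    have : ∑ i, z i * (c j * u j i) = c j * (u j ⬝ᵥ z) := by
      simp_rw [dotProduct, Finset.mul_sum]
      exact Finset.sum_congr rfl fun i _ => by ring
    rw [this, hc]; ring
  have e3 : ∑ i, (∑ j, c j * u j i) * (∑ j, c j * u j i)
      = ∑ j, c j ^ 2 * (u j ⬝ᵥ u j) := by
    simp_rw [Finset.sum_mul_sum]
    rw [Finset.sum_comm]
    refine Finset.sum_congr rfl fun j _ => ?_
    rw [Finset.sum_comm]
    rw [Finset.sum_eq_single j (fun l _ hlj => ?_) (by simp)]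
    · have : ∑ i, c j * u j i * (c j * u j i) = c j ^ 2 * (u j ⬝ᵥ u j) := by
        simp_rw [dotProduct, Finset.mul_sum]
        exact Finset.sum_congr rfl fun i _ => by ring
      exact this
    · have : ∑ i, c j * u j i * (c l * u l i) = c j * c l * (u j ⬝ᵥ u l) := by
        simp_rw [dotProduct, Finset.mul_sum]
        exact Finset.sum_congr rfl fun i _ => by ring
      rw [this, horth j l (Ne.symm hlj), mul_zero]
  have hexp : ∑ i, (z i - ∑ j, c j * u j i) ^ 2
      = z ⬝ᵥ z - 2 * ∑ j, c j ^ 2 + ∑ j, c j ^ 2 * (u j ⬝ᵥ u j) := by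
    have e1 : ∀ i : Fin m, (z i - ∑ j, c j * u j i) ^ 2
        = z i * z i - 2 * (z i * ∑ j, c j * u j i)
          + (∑ j, c j * u j i) * (∑ j, c j * u j i) := by intro i; ring
    rw [Finset.sum_congr rfl fun i _ => e1 i, Finset.sum_add_distrib,
      Finset.sum_sub_distrib, ← Finset.mul_sum, e2, e3]
    rfl
  have e4 : ∑ j, c j ^ 2 * (u j ⬝ᵥ u j) ≤ ∑ j, c j ^ 2 :=
    Finset.sum_le_sum fun j _ => by
      nlinarith [sq_nonneg (c j), hnorm j]
  have := h0.trans_eq hexp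
  calc ∑ j, (u j ⬝ᵥ z) ^ 2 = ∑ j, c j ^ 2 := rfl
    _ ≤ z ⬝ᵥ z := by linarith



lemma exists_decomp {p q : ℕ} (X : Matrix (Fin p) (Fin q) ℝ) :
    ∃ (σ : Fin q → ℝ) (u : Fin q → Fin p → ℝ) (v : Fin q → Fin q → ℝ),
      (∀ j, 0 ≤ σ j) ∧
      ((∑ j, Real.sqrt ((Matrix.isHermitian_conjTranspose_mul_self X).eigenvalues j)) = ∑ j, σ j) ∧
      (∀ i k, X i k = ∑ j, σ j * u j i * v j k) ∧
      (∀ j, u j ⬝ᵥ u j ≤ 1) ∧ (∀ j, v j ⬝ᵥ v j ≤ 1) ∧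
      (∀ j l, j ≠ l → u j ⬝ᵥ u l = 0) ∧ (∀ j l, j ≠ l → v j ⬝ᵥ v l = 0) ∧
      (∀ j, u j ⬝ᵥ (X *ᵥ v j) = σ j) := by
  classical
  set h := Matrix.isHermitian_conjTranspose_mul_self X with hh
  set μ : Fin q → ℝ := h.eigenvalues with hμ
  have hμ0 : ∀ j, 0 ≤ μ j := Matrix.eigenvalues_conjTranspose_mul_self_nonneg X
  set Q : Matrix (Fin q) (Fin q) ℝ := (h.eigenvectorUnitary : Matrix (Fin q) (Fin q) ℝ) with hQ
  have hQ1 : Qᵀ * Q = 1 := by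
    have := (Matrix.mem_unitaryGroup_iff'.mp h.eigenvectorUnitary.2)
    simpa [Matrix.star_eq_conjTranspose, hQ] using this
  have hQ2 : Q * Qᵀ = 1 := by
    have := (Matrix.mem_unitaryGroup_iff.mp h.eigenvectorUnitary.2)
    simpa [Matrix.star_eq_conjTranspose, hQ] using this
  set v : Fin q → Fin q → ℝ := fun j i => Q i j with hv
  have hvb : ∀ j, v j = ⇑(h.eigenvectorBasis j) := by
    intro j; funext i; simp [hv, hQ, Matrix.IsHermitian.eigenvectorUnitary_apply]
  have heig : ∀ j, (Xᴴ * X) *ᵥ v j = μ j • v j := by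
    intro j; rw [hvb j]; exact h.mulVec_eigenvectorBasis j
  -- orthonormality of v
  have hvorth : ∀ j l, v j ⬝ᵥ v l = (1 : Matrix (Fin q) (Fin q) ℝ) j l := by
    intro j l
    have : (Qᵀ * Q) j l = v j ⬝ᵥ v l := by
      simp [Matrix.mul_apply, dotProduct, hv]
    rw [← this, hQ1]
  have hvnorm : ∀ j, v j ⬝ᵥ v j = 1 := fun j => by rw [hvorth]; simp
  -- ‖X v_j‖² = μ j , and cross terms
  have hXv : ∀ j l, (X *ᵥ v j) ⬝ᵥ (X *ᵥ v l) = μ l * (v j ⬝ᵥ v l) := by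
    intro j l
    have : v j ⬝ᵥ ((Xᴴ * X) *ᵥ v l) = (X *ᵥ v j) ⬝ᵥ (X *ᵥ v l) := by
      rw [← Matrix.mulVec_mulVec, Matrix.dotProduct_mulVec,
        Matrix.conjTranspose_eq_transpose_of_trivial, Matrix.vecMul_transpose]
    rw [← this, heig l, dotProduct_smul]
    simp [smul_eq_mul]
  have hXv0 : ∀ j, μ j = 0 → X *ᵥ v j = 0 := by
    intro j hj
    have h2 : (X *ᵥ v j) ⬝ᵥ (X *ᵥ v j) = 0 := by rw [hXv j j, hj, zero_mul]
    funext i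
    have := (Finset.sum_eq_zero_iff_of_nonneg
      (fun i _ => mul_self_nonneg ((X *ᵥ v j) i))).mp h2 i (Finset.mem_univ i)
    have := mul_self_eq_zero.mp this
    simpa using this
  set σ : Fin q → ℝ := fun j => Real.sqrt (μ j) with hσ
  have hσ0 : ∀ j, 0 ≤ σ j := fun j => Real.sqrt_nonneg _
  have hσsq : ∀ j, σ j * σ j = μ j := fun j => Real.mul_self_sqrt (hμ0 j)
  set u : Fin q → Fin p → ℝ := fun j => (σ j)⁻¹ • (X *ᵥ v j) with hu
  have hXvσ : ∀ j, X *ᵥ v j = σ j • u j := by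
    intro j
    by_cases hj : μ j = 0
    · rw [hXv0 j hj, hu]; simp [hXv0 j hj]
    · have hσj : σ j ≠ 0 :=
        Real.sqrt_ne_zero'.mpr (lt_of_le_of_ne (hμ0 j) (Ne.symm hj))
      rw [hu]; simp only [smul_smul, mul_inv_cancel₀ hσj, one_smul]
  have hudot : ∀ j l, u j ⬝ᵥ u l = (σ j)⁻¹ * ((σ l)⁻¹ * (μ l * (v j ⬝ᵥ v l))) := by
    intro j l
    rw [hu]
    simp only [smul_dotProduct, dotProduct_smul, smul_eq_mul, hXv j l]
    ring
  have huorth : ∀ j l, j ≠ l → u j ⬝ᵥ u l = 0 := by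
    intro j l hjl
    rw [hudot j l, hvorth j l, Matrix.one_apply_ne hjl]
    ring
  have hunorm : ∀ j, u j ⬝ᵥ u j ≤ 1 := by
    intro j
    rw [hudot j j, hvnorm j]
    by_cases hj : μ j = 0
    · simp [hj]
    · have hσj : σ j ≠ 0 :=
        Real.sqrt_ne_zero'.mpr (lt_of_le_of_ne (hμ0 j) (Ne.symm hj))
      have : (σ j)⁻¹ * ((σ j)⁻¹ * (μ j * 1)) = 1 := by
        rw [mul_one, ← hσsq j]; field_simp
      rw [this]
  have hrep : ∀ i k, X i k = ∑ j, σ j * u j i * v j k := by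
    intro i k
    have e1 : ∀ j : Fin q, σ j * u j i * v j k = (X *ᵥ v j) i * v j k := by
      intro j
      rw [hXvσ j]
      simp [mul_assoc]
    rw [Finset.sum_congr rfl fun j _ => e1 j]
    have e2 : ∑ j, (X *ᵥ v j) i * v j k = ∑ j, ∑ m, X i m * Q m j * Q k j := by
      refine Finset.sum_congr rfl fun j _ => ?_
      simp only [Matrix.mulVec, dotProduct, hv, Finset.sum_mul]
    rw [e2, Finset.sum_comm]
    have e3 : ∀ m, ∑ j, X i m * Q m j * Q k j = X i m * (Q * Qᵀ) m k := by
      intro m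
      simp only [Matrix.mul_apply, Matrix.transpose_apply, Finset.mul_sum]
      exact Finset.sum_congr rfl fun j _ => by ring
    rw [Finset.sum_congr rfl fun m _ => e3 m, hQ2]
    simp [Matrix.one_apply]
  have hfin : ∀ j, u j ⬝ᵥ (X *ᵥ v j) = σ j := by
    intro j
    rw [hXvσ j, dotProduct_smul, smul_eq_mul]
    by_cases hj : μ j = 0
    · have : σ j = 0 := by rw [hσ]; simp [hj]
      rw [this]; ring
    · have h1 : u j ⬝ᵥ u j = 1 := by
        rw [hudot j j, hvnorm j, mul_one, ← hσsq j]
        have hσj : σ j ≠ 0 :=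
          Real.sqrt_ne_zero'.mpr (lt_of_le_of_ne (hμ0 j) (Ne.symm hj))
        field_simp
      rw [h1, mul_one]
  exact ⟨σ, u, v, hσ0, rfl, hrep, hunorm,
    fun j => le_of_eq (hvnorm j), huorth, fun j l h => hvorth j l ▸ Matrix.one_apply_ne h, hfin⟩



/-- Columns of a matrix with orthonormal columns form an orthonormal family;
contraction of the coefficient vector. -/
lemma contraction {m r : ℕ} (U : Matrix (Fin m) (Fin r) ℝ) (hU : Uᵀ * U = 1)
    (z : Fin m → ℝ) : ∑ i, ((Uᵀ *ᵥ z) i) ^ 2 ≤ z ⬝ᵥ z := by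
  have h := bessel (fun a => (fun i => U i a))
    (fun a b hab => by
      have : (Uᵀ * U) a b = 0 := by rw [hU, Matrix.one_apply_ne hab]
      simpa [Matrix.mul_apply, dotProduct] using this)
    (fun a => by
      have : (Uᵀ * U) a a = 1 := by rw [hU, Matrix.one_apply_eq]
      simp only [Matrix.mul_apply, Matrix.transpose_apply] at this
      simp only [dotProduct]
      rw [this]) z
  calc ∑ i, ((Uᵀ *ᵥ z) i) ^ 2 = ∑ a, ((fun i => U i a) ⬝ᵥ z) ^ 2 := by
        refine Finset.sum_congr rfl fun a _ => ?_
        simp [Matrix.mulVec, dotProduct]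
    _ ≤ z ⬝ᵥ z := h

lemma sandwich {m n r : ℕ} (U : Matrix (Fin m) (Fin r) ℝ) (V : Matrix (Fin n) (Fin r) ℝ)
    (w : Fin r → ℝ) (u : Fin m → ℝ) (v : Fin n → ℝ) :
    u ⬝ᵥ ((U * Matrix.diagonal w * Vᵀ) *ᵥ v)
      = ∑ i, w i * ((Uᵀ *ᵥ u) i) * ((Vᵀ *ᵥ v) i) := by
  rw [← Matrix.mulVec_mulVec, ← Matrix.mulVec_mulVec, Matrix.dotProduct_mulVec,
    ← Matrix.mulVec_transpose]
  have hd : (Matrix.diagonal w) *ᵥ (Vᵀ *ᵥ v) = fun i => w i * (Vᵀ *ᵥ v) i := by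
    funext i
    simp [Matrix.mulVec, Matrix.diagonal, dotProduct, Finset.sum_ite_eq, ite_mul]
  rw [hd]
  simp only [dotProduct]
  exact Finset.sum_congr rfl fun i _ => by ring

/-- Operator-norm style bound for `U * diagonal w * Vᵀ` with `0 ≤ w ≤ lam`. -/
lemma opbound {m n r : ℕ} (U : Matrix (Fin m) (Fin r) ℝ) (V : Matrix (Fin n) (Fin r) ℝ)
    (hU : Uᵀ * U = 1) (hV : Vᵀ * V = 1) (w : Fin r → ℝ) (lam : ℝ)
    (hw0 : ∀ i, 0 ≤ w i) (hwl : ∀ i, w i ≤ lam) (hlam : 0 ≤ lam)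
    (u : Fin m → ℝ) (v : Fin n → ℝ) :
    u ⬝ᵥ ((U * Matrix.diagonal w * Vᵀ) *ᵥ v)
      ≤ lam * (Real.sqrt (u ⬝ᵥ u) * Real.sqrt (v ⬝ᵥ v)) := by
  rw [sandwich]
  set a := Uᵀ *ᵥ u
  set b := Vᵀ *ᵥ v
  have h1 : ∑ i, w i * a i * b i ≤ lam * ∑ i, |a i| * |b i| := by
    rw [Finset.mul_sum]
    refine Finset.sum_le_sum fun i _ => ?_
    have h2 : w i * a i * b i ≤ w i * (|a i| * |b i|) := by
      rw [mul_assoc]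
      exact mul_le_mul_of_nonneg_left (le_trans (le_abs_self _) (by rw [abs_mul])) (hw0 i)
    exact h2.trans (mul_le_mul_of_nonneg_right (hwl i) (by positivity))
  have h3 : ∑ i, |a i| * |b i| ≤ Real.sqrt (∑ i, |a i| ^ 2) * Real.sqrt (∑ i, |b i| ^ 2) :=
    Real.sum_mul_le_sqrt_mul_sqrt _ _ _
  have h4 : Real.sqrt (∑ i, |a i| ^ 2) ≤ Real.sqrt (u ⬝ᵥ u) := by
    apply Real.sqrt_le_sqrt
    simp only [sq_abs]
    exact contraction U hU u
  have h5 : Real.sqrt (∑ i, |b i| ^ 2) ≤ Real.sqrt (v ⬝ᵥ v) := by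
    apply Real.sqrt_le_sqrt
    simp only [sq_abs]
    exact contraction V hV v
  have h6 : ∑ i, |a i| * |b i| ≤ Real.sqrt (u ⬝ᵥ u) * Real.sqrt (v ⬝ᵥ v) :=
    h3.trans (mul_le_mul h4 h5 (Real.sqrt_nonneg _) (Real.sqrt_nonneg _))
  exact h1.trans (mul_le_mul_of_nonneg_left h6 hlam)



def IP {p q : ℕ} (B C : Matrix (Fin p) (Fin q) ℝ) : ℝ := ∑ i, ∑ k, B i k * C i k
def SS {p q : ℕ} (Y : Matrix (Fin p) (Fin q) ℝ) : ℝ := ∑ i, ∑ k, (Y i k) ^ 2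

lemma SS_nonneg {p q : ℕ} (Y : Matrix (Fin p) (Fin q) ℝ) : 0 ≤ SS Y :=
  Finset.sum_nonneg fun i _ => Finset.sum_nonneg fun k _ => sq_nonneg _

lemma expand_lemma {p q : ℕ} (A Xh X : Matrix (Fin p) (Fin q) ℝ) :
    SS (X - A) = SS (Xh - A) + 2 * (IP (A - Xh) Xh - IP (A - Xh) X) + SS (X - Xh) := by
  unfold SS IP
  have hpt : ∀ i k, (X - A) i k ^ 2
      = (Xh - A) i k ^ 2 + (2 * ((A - Xh) i k * Xh i k) - 2 * ((A - Xh) i k * X i k))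
        + (X - Xh) i k ^ 2 := by
    intro i k
    simp only [Matrix.sub_apply]
    ring
  rw [Finset.sum_congr rfl fun i _ => Finset.sum_congr rfl fun k _ => hpt i k]
  simp only [Finset.sum_add_distrib, Finset.sum_sub_distrib, ← Finset.mul_sum]
  ring

lemma ip_decomp {p q n : ℕ} (G X : Matrix (Fin p) (Fin q) ℝ) (σ : Fin n → ℝ)
    (u : Fin n → Fin p → ℝ) (v : Fin n → Fin q → ℝ)
    (hrep : ∀ i k, X i k = ∑ j, σ j * u j i * v j k) :
    IP G X = ∑ j, σ j * (u j ⬝ᵥ (G *ᵥ v j)) := by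
  unfold IP
  rw [Finset.sum_congr rfl fun i (_ : i ∈ univ) => Finset.sum_congr rfl fun k _ => by
    rw [hrep i k, Finset.mul_sum]]
  rw [Finset.sum_congr rfl fun i (_ : i ∈ univ) => Finset.sum_comm]
  rw [Finset.sum_comm]
  refine Finset.sum_congr rfl fun j _ => ?_
  simp only [dotProduct, Matrix.mulVec, Finset.mul_sum]
  refine Finset.sum_congr rfl fun i _ => ?_
  exact Finset.sum_congr rfl fun k _ => by ring

lemma entry_UDV {p q r : ℕ} (U : Matrix (Fin p) (Fin r) ℝ) (V : Matrix (Fin q) (Fin r) ℝ)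
    (d : Fin r → ℝ) (i : Fin p) (k : Fin q) :
    (U * Matrix.diagonal d * Vᵀ) i k = ∑ a, d a * U i a * V k a := by
  simp only [Matrix.mul_apply, Matrix.transpose_apply]
  refine Finset.sum_congr rfl fun a _ => ?_
  rw [Finset.sum_eq_single a (fun b _ hba => by rw [Matrix.diagonal_apply_ne d hba, mul_zero])
    (by simp), Matrix.diagonal_apply_eq]
  ring

end STAux

open Real BigOperators Matrix

noncomputable section

/-- Trace norm (nuclear norm) of a real matrix: the sum of its singular values,
realized as the sum of square roots of the eigenvalues of `Aᴴ * A`. -/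
def traceNorm {p q : Type*} [Fintype p] [Fintype q] [DecidableEq q]
    (A : Matrix p q ℝ) : ℝ :=
  ∑ j, Real.sqrt ((Matrix.isHermitian_conjTranspose_mul_self A).eigenvalues j)

/-- Frobenius (entrywise ℓ²) norm of a matrix. -/
def frobNormM {p q : Type*} [Fintype p] [Fintype q] (A : Matrix p q ℝ) : ℝ :=
  Real.sqrt (∑ i, ∑ j, (A i j) ^ 2)

end

/-- singular value soft-thresholding: if `A = U·S·Vᵀ` is an SVD of `A`
(`U`, `V` with orthonormal columns, `S` diagonal with nonnegative entries) and `λ > 0`, then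
`X ↦ (1/2)‖X − A‖_F² + λ‖X‖_tr` has `U·max(S − λ, 0)·Vᵀ` as its unique minimizer. -/
theorem soft_thresholding_unique_minimizer {p q r : ℕ}
    (A : Matrix (Fin p) (Fin q) ℝ) (U : Matrix (Fin p) (Fin r) ℝ)
    (S : Matrix (Fin r) (Fin r) ℝ) (V : Matrix (Fin q) (Fin r) ℝ)
    (hU : Uᵀ * U = 1) (hV : Vᵀ * V = 1)
    (hSdiag : ∀ i j, i ≠ j → S i j = 0) (hSnonneg : ∀ i, 0 ≤ S i i)
    (hA : A = U * S * Vᵀ) (lam : ℝ) (hlam : 0 < lam) :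
    (∀ X : Matrix (Fin p) (Fin q) ℝ,
        (1 / 2) * (frobNormM ((U * (Matrix.of fun i j =>
            if i = j then max (S i j - lam) 0 else 0) * Vᵀ) - A)) ^ 2
          + lam * traceNorm (U * (Matrix.of fun i j =>
            if i = j then max (S i j - lam) 0 else 0) * Vᵀ)
        ≤ (1 / 2) * (frobNormM (X - A)) ^ 2 + lam * traceNorm X) ∧
    (∀ X : Matrix (Fin p) (Fin q) ℝ,
        (1 / 2) * (frobNormM (X - A)) ^ 2 + lam * traceNorm X
          = (1 / 2) * (frobNormM ((U * (Matrix.of fun i j =>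
              if i = j then max (S i j - lam) 0 else 0) * Vᵀ) - A)) ^ 2
            + lam * traceNorm (U * (Matrix.of fun i j =>
              if i = j then max (S i j - lam) 0 else 0) * Vᵀ)
        → X = U * (Matrix.of fun i j => if i = j then max (S i j - lam) 0 else 0) * Vᵀ) := by
  classical
  open STAux in
  set d : Fin r → ℝ := fun i => max (S i i - lam) 0 with hd
  have hd0 : ∀ i, 0 ≤ d i := fun i => le_max_right _ _
  have hDeq : (Matrix.of fun i j =>
      if i = j then max (S i j - lam) 0 else 0 : Matrix (Fin r) (Fin r) ℝ)
      = Matrix.diagonal d := by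
    ext i j
    by_cases hij : i = j
    · subst hij; simp [hd]
    · simp [Matrix.of_apply, hij, Matrix.diagonal_apply_ne _ hij]
  rw [hDeq]
  set Xh := U * Matrix.diagonal d * Vᵀ with hXh
  set w : Fin r → ℝ := fun i => S i i - d i with hw
  have hw0 : ∀ i, 0 ≤ w i := by
    intro i
    have h1 : d i ≤ S i i := max_le (by linarith) (hSnonneg i)
    simp only [hw]; linarith
  have hwl : ∀ i, w i ≤ lam := by
    intro i
    have h1 : S i i - lam ≤ d i := le_max_left _ _
    simp only [hw]; linarith
  have hwd : ∀ i, w i * d i = lam * d i := by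
    intro i
    rcases le_total (S i i) lam with h | h
    · have : d i = 0 := max_eq_right (by linarith)
      simp [this]
    · have hdi : d i = S i i - lam := max_eq_left (by linarith)
      simp only [hw, hdi]; ring
  have hSdiagonal : S = Matrix.diagonal (fun i => S i i) := by
    ext i j
    by_cases hij : i = j
    · subst hij; simp
    · rw [Matrix.diagonal_apply_ne _ hij, hSdiag i j hij]
  have hdsub : Matrix.diagonal (fun i => S i i) - Matrix.diagonal d = Matrix.diagonal w := by
    ext i j
    by_cases hij : i = j
    · subst hij; simp [hw]
    · simp [Matrix.diagonal_apply_ne _ hij]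
  have hG : A - Xh = U * Matrix.diagonal w * Vᵀ := by
    rw [hA, hXh, hSdiagonal, ← Matrix.sub_mul, ← Matrix.mul_sub, hdsub]
  set G := U * Matrix.diagonal w * Vᵀ with hGdef
  -- (b) : subgradient-type bound
  have keyb : ∀ X : Matrix (Fin p) (Fin q) ℝ, IP G X ≤ lam * traceNorm X := by
    intro X
    obtain ⟨σ, u, v, hσ0, htn, hrep, hun, hvn, huo, hvo, hfin⟩ := exists_decomp X
    have htn' : traceNorm X = ∑ j, σ j := by unfold traceNorm; exact htn
    rw [ip_decomp G X σ u v hrep, htn']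
    rw [Finset.mul_sum]
    refine Finset.sum_le_sum fun j _ => ?_
    rw [mul_comm lam (σ j)]
    refine mul_le_mul_of_nonneg_left ?_ (hσ0 j)
    have hb := opbound U V hU hV w lam hw0 hwl hlam.le (u j) (v j)
    refine hb.trans ?_
    have h1 : Real.sqrt (u j ⬝ᵥ u j) ≤ 1 := by
      rw [show (1:ℝ) = Real.sqrt 1 by simp]
      exact Real.sqrt_le_sqrt (hun j)
    have h2 : Real.sqrt (v j ⬝ᵥ v j) ≤ 1 := by
      rw [show (1:ℝ) = Real.sqrt 1 by simp]
      exact Real.sqrt_le_sqrt (hvn j)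
    have h3 : Real.sqrt (u j ⬝ᵥ u j) * Real.sqrt (v j ⬝ᵥ v j) ≤ 1 := by
      nlinarith [Real.sqrt_nonneg (u j ⬝ᵥ u j), Real.sqrt_nonneg (v j ⬝ᵥ v j)]
    nlinarith
  -- columns of U and V
  have hcolU : ∀ (a : Fin r) (i : Fin r), (Uᵀ *ᵥ (fun k => U k a)) i
      = (1 : Matrix (Fin r) (Fin r) ℝ) i a := by
    intro a i
    rw [← hU]
    simp [Matrix.mulVec, Matrix.mul_apply, dotProduct]
  have hcolV : ∀ (a : Fin r) (i : Fin r), (Vᵀ *ᵥ (fun k => V k a)) i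
      = (1 : Matrix (Fin r) (Fin r) ℝ) i a := by
    intro a i
    rw [← hV]
    simp [Matrix.mulVec, Matrix.mul_apply, dotProduct]
  -- IP G Xh = lam * ∑ d
  have hip : IP G Xh = lam * ∑ i, d i := by
    have hrepXh : ∀ i k, Xh i k = ∑ a, d a * U i a * V k a := fun i k => entry_UDV U V d i k
    rw [ip_decomp G Xh d (fun a i => U i a) (fun a k => V k a) hrepXh]
    rw [Finset.mul_sum]
    refine Finset.sum_congr rfl fun a _ => ?_
    have hsand := sandwich U V w (fun k => U k a) (fun k => V k a)
    rw [hsand]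
    have : ∑ i, w i * ((Uᵀ *ᵥ fun k => U k a) i) * ((Vᵀ *ᵥ fun k => V k a) i) = w a := by
      rw [Finset.sum_eq_single a (fun b _ hba => by
        rw [hcolU, Matrix.one_apply_ne hba]; ring) (by simp)]
      rw [hcolU, hcolV, Matrix.one_apply_eq]; ring
    rw [this, mul_comm (d a) (w a), hwd a]
  -- (a) : traceNorm Xh = ∑ d and IP G Xh = lam * traceNorm Xh
  have keya : traceNorm Xh = ∑ i, d i := by
    obtain ⟨σ, u, v, hσ0, htn, hrep, hun, hvn, huo, hvo, hfin⟩ := exists_decomp Xh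
    have htn' : traceNorm Xh = ∑ j, σ j := by unfold traceNorm; exact htn
    have hub : ∑ j, σ j ≤ ∑ i, d i := by
      have h1 : ∀ j, σ j = ∑ i, d i * ((Uᵀ *ᵥ u j) i) * ((Vᵀ *ᵥ v j) i) := by
        intro j
        rw [← hfin j, hXh, sandwich U V d (u j) (v j)]
      rw [Finset.sum_congr rfl fun j (_ : j ∈ Finset.univ) => h1 j, Finset.sum_comm]
      refine Finset.sum_le_sum fun i _ => ?_
      have e : ∑ j, d i * ((Uᵀ *ᵥ u j) i) * ((Vᵀ *ᵥ v j) i)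
          = d i * ∑ j, ((Uᵀ *ᵥ u j) i) * ((Vᵀ *ᵥ v j) i) := by
        rw [Finset.mul_sum]
        exact Finset.sum_congr rfl fun j _ => by ring
      rw [e]
      have hbesU : ∑ j, ((Uᵀ *ᵥ u j) i) ^ 2 ≤ 1 := by
        have hz := bessel u huo hun (fun k => U k i)
        have e2 : ∀ j, ((Uᵀ *ᵥ u j) i) = u j ⬝ᵥ (fun k => U k i) := by
          intro j; simp [Matrix.mulVec, dotProduct, mul_comm]
        rw [Finset.sum_congr rfl fun j (_ : j ∈ Finset.univ) => by rw [e2 j]]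
        refine hz.trans ?_
        have : (fun k => U k i) ⬝ᵥ (fun k => U k i) = (1 : Matrix (Fin r) (Fin r) ℝ) i i := by
          rw [← hU]; simp [Matrix.mul_apply, dotProduct]
        rw [this, Matrix.one_apply_eq]
      have hbesV : ∑ j, ((Vᵀ *ᵥ v j) i) ^ 2 ≤ 1 := by
        have hz := bessel v hvo hvn (fun k => V k i)
        have e2 : ∀ j, ((Vᵀ *ᵥ v j) i) = v j ⬝ᵥ (fun k => V k i) := by
          intro j; simp [Matrix.mulVec, dotProduct, mul_comm]
        rw [Finset.sum_congr rfl fun j (_ : j ∈ Finset.univ) => by rw [e2 j]]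
        refine hz.trans ?_
        have : (fun k => V k i) ⬝ᵥ (fun k => V k i) = (1 : Matrix (Fin r) (Fin r) ℝ) i i := by
          rw [← hV]; simp [Matrix.mul_apply, dotProduct]
        rw [this, Matrix.one_apply_eq]
      have hcs : ∑ j, ((Uᵀ *ᵥ u j) i) * ((Vᵀ *ᵥ v j) i) ≤ 1 := by
        have := Real.sum_mul_le_sqrt_mul_sqrt Finset.univ
          (fun j => (Uᵀ *ᵥ u j) i) (fun j => (Vᵀ *ᵥ v j) i)
        have s1 : Real.sqrt (∑ j, ((Uᵀ *ᵥ u j) i) ^ 2) ≤ 1 := by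
          rw [show (1:ℝ) = Real.sqrt 1 by simp]
          exact Real.sqrt_le_sqrt hbesU
        have s2 : Real.sqrt (∑ j, ((Vᵀ *ᵥ v j) i) ^ 2) ≤ 1 := by
          rw [show (1:ℝ) = Real.sqrt 1 by simp]
          exact Real.sqrt_le_sqrt hbesV
        nlinarith [Real.sqrt_nonneg (∑ j, ((Uᵀ *ᵥ u j) i) ^ 2),
          Real.sqrt_nonneg (∑ j, ((Vᵀ *ᵥ v j) i) ^ 2)]
      calc d i * ∑ j, ((Uᵀ *ᵥ u j) i) * ((Vᵀ *ᵥ v j) i) ≤ d i * 1 :=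
            mul_le_mul_of_nonneg_left hcs (hd0 i)
        _ = d i := mul_one _
    have hlb : ∑ i, d i ≤ ∑ j, σ j := by
      have := keyb Xh
      rw [hip, htn'] at this
      exact le_of_mul_le_mul_left this hlam
    rw [htn']
    exact le_antisymm hub hlb
  have hipXh : IP G Xh = lam * traceNorm Xh := by rw [hip, keya]
  -- Frobenius norm squared = SS
  have frob_sq : ∀ Y : Matrix (Fin p) (Fin q) ℝ, (frobNormM Y) ^ 2 = SS Y := by
    intro Y
    unfold frobNormM SS
    exact Real.sq_sqrt (Finset.sum_nonneg fun i _ => Finset.sum_nonneg fun k _ => sq_nonneg _)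
  -- main gap inequality
  have main : ∀ X : Matrix (Fin p) (Fin q) ℝ,
      (1 / 2) * (frobNormM (Xh - A)) ^ 2 + lam * traceNorm Xh + (1 / 2) * SS (X - Xh)
        ≤ (1 / 2) * (frobNormM (X - A)) ^ 2 + lam * traceNorm X := by
    intro X
    rw [frob_sq, frob_sq]
    have hexp := expand_lemma A Xh X
    rw [hG] at hexp
    have h1 := keyb X
    linarith [hexp, h1, hipXh]
  constructor
  · intro X
    have := main X
    have h0 := SS_nonneg (X - Xh)
    linarith
  · intro X heq
    have h1 := main X
    have h0 := SS_nonneg (X - Xh)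
    have hz : SS (X - Xh) = 0 := by linarith
    have hentry : ∀ i k, (X - Xh) i k = 0 := by
      intro i k
      have h2 := (Finset.sum_eq_zero_iff_of_nonneg
        (fun i (_ : i ∈ Finset.univ) => Finset.sum_nonneg
          fun k (_ : k ∈ Finset.univ) => sq_nonneg ((X - Xh) i k))).mp hz i (Finset.mem_univ i)
      have h3 := (Finset.sum_eq_zero_iff_of_nonneg
        (fun k (_ : k ∈ Finset.univ) => sq_nonneg ((X - Xh) i k))).mp h2 k (Finset.mem_univ k)
      exact (pow_eq_zero_iff two_ne_zero).mp h3
    ext i k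
    have := hentry i k
    rw [Matrix.sub_apply] at this
    linarith
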